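/- arXiv:1712.03008 — 7 statements merged into one kernel-verified Lean document; each statement's English description precedes it below -/
import Mathlib

section
/- Assume in addition that Q(e i) = 1 or Q(e i) = -1 for every i. Then for all finite subsets S, T of Fin N there exists κ ∈ R with κ = 1 or κ = -1 such that γ_S · γ_T = κ • γ_{S Δ T}, where S Δ T denotes the symmetric difference of S and T. -/
/-- The ordered product of Clifford generators `ι (e i)` over `i ∈ S`,
taken in increasing order of indices, with `γ_∅ = 1`. -/
noncomputable def gammaProd {R M : Type*} [CommRing R] [AddCommGroup M] [Module R M]
    (Q : QuadraticForm R M) {N : ℕ} (e : Fin N → M) (S : Finset (Fin N)) :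
    CliffordAlgebra Q :=
  ((S.sort (· ≤ ·)).map fun i => CliffordAlgebra.ι Q (e i)).prod

section Aux

variable {R M : Type*} [CommRing R] [AddCommGroup M] [Module R M]
    (Q : QuadraticForm R M) {N : ℕ} (e : Fin N → M)

lemma pm_mul {a b : R} (ha : a = 1 ∨ a = -1) (hb : b = 1 ∨ b = -1) :
    a * b = 1 ∨ a * b = -1 := by
  rcases ha with h | h <;> rcases hb with h' | h' <;> subst h <;> subst h' <;> simp

lemma pm_pow (n : ℕ) : ((-1 : R) ^ n = 1) ∨ ((-1 : R) ^ n = -1) := by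
  rcases Nat.even_or_odd n with h | h
  · exact Or.inl h.neg_one_pow
  · exact Or.inr h.neg_one_pow

lemma gammaProd_empty : gammaProd Q e (∅ : Finset (Fin N)) = 1 := by
  simp [gammaProd]

lemma gammaProd_singleton (j : Fin N) :
    gammaProd Q e {j} = CliffordAlgebra.ι Q (e j) := by
  simp [gammaProd]

lemma anticomm (horth : ∀ i j : Fin N, i ≠ j → QuadraticMap.polar Q (e i) (e j) = 0)
    {i j : Fin N} (hij : i ≠ j) :
    CliffordAlgebra.ι Q (e i) * CliffordAlgebra.ι Q (e j) =
      -(CliffordAlgebra.ι Q (e j) * CliffordAlgebra.ι Q (e i)) := by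
  have h := CliffordAlgebra.ι_mul_ι_add_swap (Q := Q) (e i) (e j)
  rw [horth i j hij, map_zero] at h
  exact eq_neg_of_add_eq_zero_left h

lemma listA (horth : ∀ i j : Fin N, i ≠ j → QuadraticMap.polar Q (e i) (e j) = 0)
    (j : Fin N) :
    ∀ (l : List (Fin N)), (∀ i ∈ l, i ≠ j) →
      (l.map fun i => CliffordAlgebra.ι Q (e i)).prod * CliffordAlgebra.ι Q (e j)
        = ((-1 : R) ^ l.length) •
          (CliffordAlgebra.ι Q (e j) * (l.map fun i => CliffordAlgebra.ι Q (e i)).prod) := by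
  intro l
  induction l with
  | nil => simp
  | cons i l ih =>
    intro h
    have hij : i ≠ j := h i List.mem_cons_self
    simp only [List.map_cons, List.prod_cons, List.length_cons]
    rw [mul_assoc, ih (fun x hx => h x (List.mem_cons_of_mem _ hx)), mul_smul_comm,
      ← mul_assoc, anticomm Q e horth hij, neg_mul, mul_assoc, pow_succ]
    module

lemma gammaProd_insert {m : Fin N} {U : Finset (Fin N)} (hm : m ∉ U)
    (hle : ∀ x ∈ U, m ≤ x) :
    gammaProd Q e (insert m U) = CliffordAlgebra.ι Q (e m) * gammaProd Q e U := by
  unfold gammaProd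
  rw [Finset.sort_insert (· ≤ ·) hle hm, List.map_cons, List.prod_cons]

lemma gammaProd_min {S : Finset (Fin N)} (hS : S.Nonempty) :
    gammaProd Q e S =
      CliffordAlgebra.ι Q (e (S.min' hS)) * gammaProd Q e (S.erase (S.min' hS)) := by
  set m := S.min' hS with hm
  have h1 : m ∉ S.erase m := Finset.notMem_erase _ _
  have h2 : ∀ x ∈ S.erase m, m ≤ x := fun x hx => S.min'_le x (Finset.mem_of_mem_erase hx)
  rw [← gammaProd_insert Q e h1 h2, Finset.insert_erase (S.min'_mem hS)]

lemma lemR (horth : ∀ i j : Fin N, i ≠ j → QuadraticMap.polar Q (e i) (e j) = 0)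
    (hnorm : ∀ i : Fin N, Q (e i) = 1 ∨ Q (e i) = -1)
    (S : Finset (Fin N)) (j : Fin N) :
    ∃ κ : R, (κ = 1 ∨ κ = -1) ∧
      gammaProd Q e S * CliffordAlgebra.ι Q (e j) = κ • gammaProd Q e (symmDiff S {j}) := by
  induction S using Finset.strongInduction with
  | _ S ih =>
  rcases S.eq_empty_or_nonempty with rfl | hS
  · refine ⟨1, Or.inl rfl, ?_⟩
    have hsd : symmDiff (∅ : Finset (Fin N)) {j} = {j} := by
      ext a; simp [Finset.mem_symmDiff]
    rw [hsd]
    simp [gammaProd_empty, gammaProd_singleton]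
  set m := S.min' hS with hmdef
  have hmS : m ∈ S := S.min'_mem hS
  have hsplit := gammaProd_min Q e hS
  rw [← hmdef] at hsplit
  by_cases hj : j = m
  · rw [hj]
    have hnot : ∀ i ∈ (S.erase m).sort (· ≤ ·), i ≠ m := fun i hi =>
      Finset.ne_of_mem_erase ((Finset.mem_sort (α := Fin N) (· ≤ ·)).mp hi)
    have hA := listA Q e horth m ((S.erase m).sort (· ≤ ·)) hnot
    have hsd : symmDiff S {m} = S.erase m := by
      ext a
      simp only [Finset.mem_symmDiff, Finset.mem_singleton, Finset.mem_erase]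
      by_cases ha : a = m <;> simp [ha, hmS]
    refine ⟨(-1 : R) ^ ((S.erase m).sort (· ≤ ·)).length * Q (e m),
      pm_mul (pm_pow _) (hnorm m), ?_⟩
    rw [hsplit, hsd, mul_assoc]
    show CliffordAlgebra.ι Q (e m) *
        (((((S.erase m).sort (· ≤ ·)).map fun i => CliffordAlgebra.ι Q (e i)).prod) *
          CliffordAlgebra.ι Q (e m)) = _
    rw [hA, mul_smul_comm, ← mul_assoc, CliffordAlgebra.ι_sq_scalar, ← Algebra.smul_def,
      smul_smul]
    rfl
  · by_cases hjm : j < m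
    · -- j smaller than everything in S
      have hjS : j ∉ S := fun h => absurd (S.min'_le j h) (not_le.mpr hjm)
      have hnot : ∀ i ∈ S.sort (· ≤ ·), i ≠ j := by
        intro i hi
        have := (Finset.mem_sort (α := Fin N) (· ≤ ·)).mp hi
        exact fun h => hjS (h ▸ this)
      have hA := listA Q e horth j (S.sort (· ≤ ·)) hnot
      have hsd : symmDiff S {j} = insert j S := by
        ext a
        simp only [Finset.mem_symmDiff, Finset.mem_singleton, Finset.mem_insert]
        by_cases ha : a = j <;> simp [ha, hjS]
      have hins : gammaProd Q e (insert j S) = CliffordAlgebra.ι Q (e j) * gammaProd Q e S :=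
        gammaProd_insert Q e hjS (fun x hx => le_trans hjm.le (S.min'_le x hx))
      refine ⟨(-1 : R) ^ (S.sort (· ≤ ·)).length, pm_pow _, ?_⟩
      rw [hsd, hins]
      exact hA
    · -- m < j
      have hmj : m < j := lt_of_le_of_ne (not_lt.mp hjm) (Ne.symm hj)
      obtain ⟨κ, hκ, hrec⟩ := ih (S.erase m) (Finset.erase_ssubset hmS)
      have hmem : m ∉ symmDiff (S.erase m) {j} := by
        simp [Finset.mem_symmDiff, Ne.symm hj]
      have hle : ∀ x ∈ symmDiff (S.erase m) {j}, m ≤ x := by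
        intro x hx
        rw [Finset.mem_symmDiff] at hx
        rcases hx with ⟨hx, _⟩ | ⟨hx, _⟩
        · exact S.min'_le x (Finset.mem_of_mem_erase hx)
        · simp only [Finset.mem_singleton] at hx
          exact hx ▸ hmj.le
      have hsd : insert m (symmDiff (S.erase m) {j}) = symmDiff S {j} := by
        ext a
        simp only [Finset.mem_insert, Finset.mem_symmDiff, Finset.mem_singleton,
          Finset.mem_erase]
        by_cases ha : a = m <;> by_cases haj : a = j <;> simp [ha, haj, hmS, hj] <;> tauto
      refine ⟨κ, hκ, ?_⟩
      rw [hsplit, mul_assoc, hrec, mul_smul_comm, ← gammaProd_insert Q e hmem hle, hsd]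

lemma mainAux (horth : ∀ i j : Fin N, i ≠ j → QuadraticMap.polar Q (e i) (e j) = 0)
    (hnorm : ∀ i : Fin N, Q (e i) = 1 ∨ Q (e i) = -1)
    (T : Finset (Fin N)) : ∀ S : Finset (Fin N),
    ∃ κ : R, (κ = 1 ∨ κ = -1) ∧
      gammaProd Q e S * gammaProd Q e T = κ • gammaProd Q e (symmDiff S T) := by
  induction T using Finset.strongInduction with
  | _ T ih =>
  intro S
  rcases T.eq_empty_or_nonempty with rfl | hT
  · refine ⟨1, Or.inl rfl, ?_⟩
    have hsd : symmDiff S (∅ : Finset (Fin N)) = S := by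
      ext a; simp [Finset.mem_symmDiff]
    rw [hsd, gammaProd_empty, mul_one, one_smul]
  set m := T.min' hT with hmdef
  have hmT : m ∈ T := T.min'_mem hT
  have hsplit := gammaProd_min Q e hT
  rw [← hmdef] at hsplit
  obtain ⟨κ₁, hκ₁, h1⟩ := lemR Q e horth hnorm S m
  obtain ⟨κ₂, hκ₂, h2⟩ := ih (T.erase m) (Finset.erase_ssubset hmT) (symmDiff S {m})
  refine ⟨κ₁ * κ₂, pm_mul hκ₁ hκ₂, ?_⟩
  have hT' : symmDiff ({m} : Finset (Fin N)) (T.erase m) = T := by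
    ext a
    simp only [Finset.mem_symmDiff, Finset.mem_singleton, Finset.mem_erase]
    by_cases ha : a = m <;> simp [ha, hmT]
  calc gammaProd Q e S * gammaProd Q e T
      = (gammaProd Q e S * CliffordAlgebra.ι Q (e m)) * gammaProd Q e (T.erase m) := by
        rw [hsplit, mul_assoc]
    _ = κ₁ • (gammaProd Q e (symmDiff S {m}) * gammaProd Q e (T.erase m)) := by
        rw [h1, smul_mul_assoc]
    _ = (κ₁ * κ₂) • gammaProd Q e (symmDiff (symmDiff S {m}) (T.erase m)) := by
        rw [h2, smul_smul]
    _ = (κ₁ * κ₂) • gammaProd Q e (symmDiff S T) := by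
        rw [symmDiff_assoc, hT']

end Aux

/-- if additionally `Q (e i) = ±1` for every `i`, then
`γ_S · γ_T = κ • γ_{S Δ T}` for some `κ = ±1`. -/
theorem gammaProd_mul_eq_symmDiff {R M : Type*} [CommRing R] [AddCommGroup M] [Module R M]
    (Q : QuadraticForm R M) {N : ℕ} (e : Fin N → M)
    (horth : ∀ i j : Fin N, i ≠ j → QuadraticMap.polar Q (e i) (e j) = 0)
    (hnorm : ∀ i : Fin N, Q (e i) = 1 ∨ Q (e i) = -1)
    (S T : Finset (Fin N)) :
    ∃ κ : R, (κ = 1 ∨ κ = -1) ∧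
      gammaProd Q e S * gammaProd Q e T = κ • gammaProd Q e (symmDiff S T) := by
  exact mainAux Q e horth hnorm T S
end

section
/- For all finite subsets S, T of Fin N, the ℤ₂^N-graded bracket of Clifford monomials closes as follows: γ_S · γ_T - (-1)^{|S ∩ T|} · γ_T · γ_S = (1 - (-1)^{|S|·|T|}) · γ_S · γ_T in Cl(Q). -/
section Aux

variable {R M : Type*} [CommRing R] [AddCommGroup M] [Module R M] (Q : QuadraticForm R M)
  {N : ℕ} (e : Fin N → M)
  (horth : ∀ i j : Fin N, i ≠ j → QuadraticMap.polar Q (e i) (e j) = 0)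

include horth

private lemma aux_move (i : Fin N) (l : List (Fin N)) :
    CliffordAlgebra.ι Q (e i) * (l.map fun j => CliffordAlgebra.ι Q (e j)).prod
      = ((-1 : ℤ) ^ (l.countP (· ≠ i))) •
        ((l.map fun j => CliffordAlgebra.ι Q (e j)).prod * CliffordAlgebra.ι Q (e i)) := by
  induction l with
  | nil => simp
  | cons j l ih =>
    simp only [List.map_cons, List.prod_cons, List.countP_cons]
    by_cases hji : j = i
    · subst hji
      rw [if_neg (by simp), add_zero, mul_assoc, ih, mul_smul_comm]
    · have hpol : QuadraticMap.polar Q (e i) (e j) = 0 := horth i j (fun h => hji h.symm)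
      have hanti : CliffordAlgebra.ι Q (e i) * CliffordAlgebra.ι Q (e j)
          = -(CliffordAlgebra.ι Q (e j) * CliffordAlgebra.ι Q (e i)) := by
        have h := CliffordAlgebra.ι_mul_ι_add_swap (Q := Q) (e i) (e j)
        rw [hpol, map_zero] at h
        rw [eq_neg_iff_add_eq_zero, h]
      rw [if_pos (by simp [hji]), ← mul_assoc, hanti, neg_mul, mul_assoc, ih,
        mul_smul_comm, pow_succ, mul_smul, mul_assoc]
      simp

private lemma aux_move2 (la lb : List (Fin N)) :
    (la.map fun j => CliffordAlgebra.ι Q (e j)).prod *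
        (lb.map fun j => CliffordAlgebra.ι Q (e j)).prod
      = ((-1 : ℤ) ^ ((la.map fun i => lb.countP (· ≠ i)).sum)) •
        ((lb.map fun j => CliffordAlgebra.ι Q (e j)).prod *
          (la.map fun j => CliffordAlgebra.ι Q (e j)).prod) := by
  induction la with
  | nil => simp
  | cons i la ih =>
    simp only [List.map_cons, List.prod_cons, List.sum_cons]
    rw [mul_assoc, ih, mul_smul_comm, ← mul_assoc, aux_move Q e horth i lb,
      smul_mul_assoc, smul_smul, ← pow_add, mul_assoc, add_comm]

end Aux

/-- closure of the ℤ₂^N graded bracket: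
`γ_S·γ_T - (-1)^{|S ∩ T|}·γ_T·γ_S = (1 - (-1)^{|S|·|T|})·γ_S·γ_T`. -/
theorem gammaProd_graded_bracket_closure {R M : Type*} [CommRing R] [AddCommGroup M]
    [Module R M] (Q : QuadraticForm R M) {N : ℕ} (e : Fin N → M)
    (horth : ∀ i j : Fin N, i ≠ j → QuadraticMap.polar Q (e i) (e j) = 0)
    (S T : Finset (Fin N)) :
    gammaProd Q e S * gammaProd Q e T -
        ((-1 : ℤ) ^ (S ∩ T).card) • (gammaProd Q e T * gammaProd Q e S) =
      ((1 - (-1 : ℤ) ^ (S.card * T.card))) • (gammaProd Q e S * gammaProd Q e T) := by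
  set la := S.sort (· ≤ ·) with hla
  set lb := T.sort (· ≤ ·) with hlb
  set c : ℕ := (la.map fun i => lb.countP (· ≠ i)).sum with hc
  have key : gammaProd Q e S * gammaProd Q e T
      = ((-1 : ℤ) ^ c) • (gammaProd Q e T * gammaProd Q e S) :=
    aux_move2 Q e horth la lb
  -- compute c + |S ∩ T| = |S| * |T|
  have hcount : ∀ i : Fin N, lb.countP (· ≠ i) + (if i ∈ T then 1 else 0) = T.card := by
    intro i
    have hcnt : lb.countP (· = i) = if i ∈ T then 1 else 0 := by
      have hcc : lb.countP (· = i) = lb.count i := by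
        apply List.countP_congr
        intro a _
        simp
      rw [hcc]
      by_cases hi : i ∈ T
      · rw [if_pos hi]
        exact List.count_eq_one_of_mem (T.sort_nodup _)
          (by rw [hlb, Finset.mem_sort]; exact hi)
      · rw [if_neg hi]
        exact List.count_eq_zero_of_not_mem
          (by rw [hlb, Finset.mem_sort]; exact hi)
    have hlen : lb.length = T.card := T.length_sort _
    have hsplit : T.card = lb.countP (· ≠ i) + lb.countP (· = i) := by
      rw [← hlen, List.length_eq_countP_add_countP (fun j => decide (j ≠ i))]
      congr 1
      apply List.countP_congr
      intro a _
      simp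
    rw [hcnt] at hsplit
    omega
  have hsum : c + (S ∩ T).card = S.card * T.card := by
    have h1 : c = ∑ i ∈ S, lb.countP (· ≠ i) := by
      rw [hc, ← Finset.sum_map_toList]
      exact List.Perm.sum_eq (List.Perm.map _ (S.sort_perm_toList _))
    have h2 : (S ∩ T).card = ∑ i ∈ S, (if i ∈ T then 1 else 0) := by
      rw [Finset.sum_ite_mem, Finset.sum_const, smul_eq_mul, mul_one]
    rw [h1, h2, ← Finset.sum_add_distrib]
    have h3 : ∀ i ∈ S, lb.countP (· ≠ i) + (if i ∈ T then 1 else 0) = T.card :=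
      fun i _ => hcount i
    rw [Finset.sum_congr rfl h3, Finset.sum_const, smul_eq_mul]
  have hkey2 : gammaProd Q e T * gammaProd Q e S
      = ((-1 : ℤ) ^ c) • (gammaProd Q e S * gammaProd Q e T) := by
    rw [key, smul_smul, ← pow_add, ← two_mul, pow_mul]
    norm_num
  rw [hkey2, smul_smul, ← pow_add, add_comm, hsum, sub_smul, one_smul]
end

section
/- The ℤ₂^N graded Jacobi identity holds for Clifford monomials: for all finite subsets S, T, U of Fin N, writing ⟦x, y⟧_s := x·y - (-1)^s · y·x for x, y ∈ Cl(Q) and s ∈ ℤ, one has (-1)^{|S ∩ U|} · ⟦γ_S, ⟦γ_T, γ_U⟧_{|T ∩ U|}⟧_{|S ∩ T| + |S ∩ U|} + (-1)^{|T ∩ S|} · ⟦γ_T, ⟦γ_U, γ_S⟧_{|U ∩ S|}⟧_{|T ∩ U| + |T ∩ S|} + (-1)^{|U ∩ T|} · ⟦γ_U, ⟦γ_S, γ_T⟧_{|S ∩ T|}⟧_{|U ∩ S| + |U ∩ T|} = 0. -/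
/-- The ℤ₂^N graded bracket `⟦x, y⟧_s := x·y - (-1)^s · y·x` for `s ∈ ℤ`. -/
noncomputable def gBracket {A : Type*} [Ring A] (s : ℤ) (x y : A) : A :=
  x * y - (((-1 : ℤˣ) ^ s : ℤˣ) : ℤ) • (y * x)

open CliffordAlgebra in
theorem single_comm {R M : Type*} [CommRing R] [AddCommGroup M] [Module R M]
    (Q : QuadraticForm R M) {N : ℕ} (e : Fin N → M)
    (horth : ∀ i j : Fin N, i ≠ j → QuadraticMap.polar Q (e i) (e j) = 0)
    (j : Fin N) : ∀ (l : List (Fin N)),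
    ι Q (e j) * (l.map fun i => ι Q (e i)).prod =
      ((-1 : ℤ) ^ (l.filter (fun i => i ≠ j)).length) •
        ((l.map fun i => ι Q (e i)).prod * ι Q (e j))
  | [] => by simp
  | i :: l => by
    have IH := single_comm Q e horth j l
    simp only [List.map_cons, List.prod_cons, List.filter_cons]
    by_cases hij : i = j
    · subst hij
      have h1 : (decide ¬ i = i) = false := by simp
      simp only [h1, Bool.false_eq_true, if_false]
      conv_lhs => rw [IH]
      rw [mul_smul_comm, ← mul_assoc]
    · have h1 : (decide ¬ i = j) = true := by simp [hij]
      simp only [h1, if_true, List.length_cons]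
      have hanti : ι Q (e j) * ι Q (e i) = -(ι Q (e i) * ι Q (e j)) := by
        refine eq_neg_of_add_eq_zero_left ?_
        rw [CliffordAlgebra.ι_mul_ι_add_swap, horth j i (fun h => hij h.symm)]
        simp
      rw [← mul_assoc, hanti, neg_mul, mul_assoc, IH, mul_smul_comm, ← mul_assoc, ← neg_smul,
        pow_succ, mul_comm ((-1:ℤ)^_)]
      norm_num
termination_by l => l.length

open CliffordAlgebra in
theorem list_comm {R M : Type*} [CommRing R] [AddCommGroup M] [Module R M]
    (Q : QuadraticForm R M) {N : ℕ} (e : Fin N → M)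
    (horth : ∀ i j : Fin N, i ≠ j → QuadraticMap.polar Q (e i) (e j) = 0) :
    ∀ (l m : List (Fin N)),
    (l.map fun i => ι Q (e i)).prod * (m.map fun i => ι Q (e i)).prod =
      ((-1 : ℤ) ^ ((l.map fun j => (m.filter (fun i => i ≠ j)).length).sum)) •
        ((m.map fun i => ι Q (e i)).prod * (l.map fun i => ι Q (e i)).prod)
  | [], m => by simp
  | j :: l, m => by
    have IH := list_comm Q e horth l m
    simp only [List.map_cons, List.prod_cons, List.sum_cons]
    rw [mul_assoc, IH, mul_smul_comm, ← mul_assoc, single_comm Q e horth j m,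
      smul_mul_assoc, smul_smul, mul_assoc, ← pow_add, add_comm]

theorem cnt_aux {N : ℕ} (j : Fin N) : ∀ (m : List (Fin N)), m.Nodup →
    (m.filter (fun i => i ≠ j)).length + (if j ∈ m then 1 else 0) = m.length
  | [], _ => by simp
  | i :: m, h => by
    have hm := (List.nodup_cons.mp h).2
    have IH := cnt_aux j m hm
    by_cases hij : i = j
    · subst hij
      have hj : i ∉ m := (List.nodup_cons.mp h).1
      simp only [List.filter_cons, List.mem_cons, true_or, if_true]
      have h1 : (decide ¬ (i : Fin N) = i) = false := by simp
      rw [h1]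
      simp only [Bool.false_eq_true, if_false, List.length_cons]
      rw [List.filter_eq_self.mpr (fun a ha => by
        simp only [ne_eq, decide_eq_true_eq]
        rintro rfl
        exact hj ha)]
    · simp only [List.filter_cons, List.mem_cons]
      have h1 : (decide ¬ i = j) = true := by simp [hij]
      rw [h1]
      simp only [if_true, List.length_cons]
      have : (j = i ∨ j ∈ m) ↔ j ∈ m := by
        constructor
        · rintro (rfl | h) <;> [exact absurd rfl hij; exact h]
        · exact Or.inr
      rw [if_congr this rfl rfl]
      omega

theorem sort_filter_count {N : ℕ} (T : Finset (Fin N)) (j : Fin N) :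
    ((T.sort (· ≤ ·)).filter (fun i => i ≠ j)).length + (if j ∈ T then 1 else 0) = T.card := by
  have := cnt_aux j (T.sort (· ≤ ·)) (T.sort_nodup _)
  rwa [Finset.length_sort, if_congr (Finset.mem_sort _) rfl rfl] at this

theorem sum_key {N : ℕ} (S T : Finset (Fin N)) :
    ((S.sort (· ≤ ·)).map fun j => ((T.sort (· ≤ ·)).filter (fun i => i ≠ j)).length).sum
      + (S ∩ T).card = S.card * T.card := by
  have h1 : ((S.sort (· ≤ ·)).map fun j =>
      ((T.sort (· ≤ ·)).filter (fun i => i ≠ j)).length).sum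
      = ∑ j ∈ S, ((T.sort (· ≤ ·)).filter (fun i => i ≠ j)).length := by
    exact ((Finset.sort_perm_toList S (· ≤ ·)).map _).sum_eq.trans (Finset.sum_map_toList S _)
  have h2 : (S ∩ T).card = ∑ j ∈ S, if j ∈ T then 1 else 0 := by
    rw [← Finset.filter_mem_eq_inter, Finset.card_filter]
  rw [h1, h2, ← Finset.sum_add_distrib]
  rw [Finset.sum_congr rfl (fun j _ => sort_filter_count T j), Finset.sum_const, smul_eq_mul]

open CliffordAlgebra in
theorem gamma_comm {R M : Type*} [CommRing R] [AddCommGroup M] [Module R M]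
    (Q : QuadraticForm R M) {N : ℕ} (e : Fin N → M)
    (horth : ∀ i j : Fin N, i ≠ j → QuadraticMap.polar Q (e i) (e j) = 0)
    (S T : Finset (Fin N)) :
    gammaProd Q e S * gammaProd Q e T =
      ((-1 : ℤ) ^ (S.card * T.card + (S ∩ T).card)) • (gammaProd Q e T * gammaProd Q e S) := by
  rw [gammaProd, gammaProd, list_comm Q e horth]
  congr 1
  have h := sum_key S T
  set K := ((S.sort (· ≤ ·)).map fun j =>
      ((T.sort (· ≤ ·)).filter (fun i => i ≠ j)).length).sum with hK
  have : S.card * T.card + (S ∩ T).card = K + 2 * (S ∩ T).card := by omega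
  rw [this, pow_add, pow_mul]
  norm_num

theorem jacobi_aux {A : Type*} [Ring A] (x y z : A) (u v w p q r : ℤ)
    (hu : u * u = 1) (hv : v * v = 1) (hw : w * w = 1)
    (hp : p * p = 1) (hq : q * q = 1) (hr : r * r = 1)
    (hxy : y * x = (p * u) • (x * y))
    (hyz : z * y = (q * v) • (y * z))
    (hxz : z * x = (r * w) • (x * z)) :
    w • (x * (y * z - v • (z * y)) - (u * w) • ((y * z - v • (z * y)) * x)) +
      u • (y * (z * x - w • (x * z)) - (v * u) • ((z * x - w • (x * z)) * y)) +
      v • (z * (x * y - u • (y * x)) - (w * v) • ((x * y - u • (y * x)) * z)) = 0 := by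
  have P1 : x * (z * y) = (q * v) • (x * (y * z)) := by rw [hyz, mul_smul_comm]
  have P2 : (y * z) * x = ((r * w) * (p * u)) • (x * (y * z)) := by
    rw [mul_assoc, hxz, mul_smul_comm, ← mul_assoc, hxy, smul_mul_assoc, smul_smul, mul_assoc x y z]
  have P3 : (z * y) * x = ((q * v) * ((r * w) * (p * u))) • (x * (y * z)) := by
    rw [hyz, smul_mul_assoc, P2, smul_smul]
  have P4 : y * (z * x) = ((r * w) * (p * u)) • (x * (y * z)) := by rw [← mul_assoc, P2]
  have P5 : y * (x * z) = (p * u) • (x * (y * z)) := by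
    rw [← mul_assoc, hxy, smul_mul_assoc, mul_assoc]
  have P6 : (z * x) * y = ((r * w) * (q * v)) • (x * (y * z)) := by
    rw [hxz, smul_mul_assoc, mul_assoc, P1, smul_smul]
  have P7 : (x * z) * y = (q * v) • (x * (y * z)) := by rw [mul_assoc, P1]
  have P8 : z * (x * y) = ((r * w) * (q * v)) • (x * (y * z)) := by rw [← mul_assoc, P6]
  have P9 : z * (y * x) = ((p * u) * ((r * w) * (q * v))) • (x * (y * z)) := by
    rw [hxy, mul_smul_comm, P8, smul_smul]
  have P11 : (y * x) * z = (p * u) • (x * (y * z)) := by rw [hxy, smul_mul_assoc, mul_assoc]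
  simp only [mul_sub, sub_mul, smul_sub, mul_smul_comm, smul_mul_assoc]
  rw [P1, P2, P3, P4, P5, P6, P7, P8, P9, P11, mul_assoc x y z]
  simp only [smul_smul, ← sub_smul, ← add_smul]
  convert zero_smul ℤ (x * (y * z)) using 2
  rcases mul_self_eq_one_iff.mp hu with rfl | rfl <;>
    rcases mul_self_eq_one_iff.mp hv with rfl | rfl <;>
      rcases mul_self_eq_one_iff.mp hw with rfl | rfl <;>
        rcases mul_self_eq_one_iff.mp hp with rfl | rfl <;>
          rcases mul_self_eq_one_iff.mp hq with rfl | rfl <;>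
            rcases mul_self_eq_one_iff.mp hr with rfl | rfl <;> ring


/-- the ℤ₂^N graded Jacobi identity for Clifford monomials. -/
theorem gammaProd_graded_jacobi {R M : Type*} [CommRing R] [AddCommGroup M]
    [Module R M] (Q : QuadraticForm R M) {N : ℕ} (e : Fin N → M)
    (horth : ∀ i j : Fin N, i ≠ j → QuadraticMap.polar Q (e i) (e j) = 0)
    (S T U : Finset (Fin N)) :
    ((-1 : ℤ) ^ (S ∩ U).card) •
        gBracket (((S ∩ T).card : ℤ) + ((S ∩ U).card : ℤ)) (gammaProd Q e S)
          (gBracket ((T ∩ U).card : ℤ) (gammaProd Q e T) (gammaProd Q e U)) +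
      ((-1 : ℤ) ^ (T ∩ S).card) •
        gBracket (((T ∩ U).card : ℤ) + ((T ∩ S).card : ℤ)) (gammaProd Q e T)
          (gBracket ((U ∩ S).card : ℤ) (gammaProd Q e U) (gammaProd Q e S)) +
      ((-1 : ℤ) ^ (U ∩ T).card) •
        gBracket (((U ∩ S).card : ℤ) + ((U ∩ T).card : ℤ)) (gammaProd Q e U)
          (gBracket ((S ∩ T).card : ℤ) (gammaProd Q e S) (gammaProd Q e T)) = 0 := by
  have cast1 : ∀ n : ℕ, (((-1 : ℤˣ) ^ ((n : ℕ) : ℤ) : ℤˣ) : ℤ) = (-1 : ℤ) ^ n := by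
    intro n; rw [zpow_natCast]; simp
  have cast2 : ∀ n m : ℕ, (((-1 : ℤˣ) ^ (((n : ℕ) : ℤ) + ((m : ℕ) : ℤ)) : ℤˣ) : ℤ) =
      (-1 : ℤ) ^ n * (-1 : ℤ) ^ m := by
    intro n m; rw [← Nat.cast_add, zpow_natCast]; simp [pow_add]
  simp only [gBracket, cast2, cast1]
  rw [Finset.inter_comm T S, Finset.inter_comm U S, Finset.inter_comm U T]
  have sq1 : ∀ k : ℕ, (-1 : ℤ) ^ k * (-1 : ℤ) ^ k = 1 := fun k => by
    rw [← pow_add, ← two_mul, pow_mul]; norm_num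
  have hxy := gamma_comm Q e horth T S
  rw [Finset.inter_comm T S, pow_add] at hxy
  have hyz := gamma_comm Q e horth U T
  rw [Finset.inter_comm U T, pow_add] at hyz
  have hxz := gamma_comm Q e horth U S
  rw [Finset.inter_comm U S, pow_add] at hxz
  exact jacobi_aux (gammaProd Q e S) (gammaProd Q e T) (gammaProd Q e U) _ _ _ _ _ _
    (sq1 _) (sq1 _) (sq1 _) (sq1 _) (sq1 _) (sq1 _) hxy hyz hxz
end

section
/- Let S, T be finite subsets of Fin N and let T_a, T_b ∈ A be homogeneous elements with T_a ∈ 𝒜(|S| mod 2) and T_b ∈ 𝒜(|T| mod 2). Then in Cl(Q) ⊗_R A the ℤ₂^N graded bracket reduces to the supercommutator of the second factors: (γ_S ⊗ T_a)·(γ_T ⊗ T_b) - (-1)^{|S ∩ T|} · (γ_T ⊗ T_b)·(γ_S ⊗ T_a) = (γ_S · γ_T) ⊗ (T_a·T_b - (-1)^{|S|·|T|} · T_b·T_a). -/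
open TensorProduct

section Aux

variable {R M : Type*} [CommRing R] [AddCommGroup M] [Module R M]
    (Q : QuadraticForm R M) {N : ℕ} (e : Fin N → M)
    (horth : ∀ i j : Fin N, i ≠ j → QuadraticMap.polar Q (e i) (e j) = 0)

include horth

/-- Moving one generator past a list of generators. -/
lemma gen_mul_prodL (i : Fin N) (l : List (Fin N)) :
    CliffordAlgebra.ι Q (e i) * (l.map fun j => CliffordAlgebra.ι Q (e j)).prod =
      ((-1 : ℤ) ^ (l.countP (fun j => j ≠ i))) •
        ((l.map fun j => CliffordAlgebra.ι Q (e j)).prod * CliffordAlgebra.ι Q (e i)) := by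
  induction l with
  | nil => simp
  | cons j t ih =>
    simp only [List.map_cons, List.prod_cons]
    by_cases h : j = i
    · subst h
      rw [List.countP_cons_of_neg (p := fun k => decide (k ≠ j)) (a := j) (by simp)]
      rw [mul_assoc]  -- no-op guard
      rw [ih, mul_smul_comm, ← mul_assoc]
    · rw [List.countP_cons_of_pos (p := fun k => decide (k ≠ i)) (a := j) (by simp [h])]
      have hanti : CliffordAlgebra.ι Q (e i) * CliffordAlgebra.ι Q (e j)
          = - (CliffordAlgebra.ι Q (e j) * CliffordAlgebra.ι Q (e i)) := by
        refine eq_neg_of_add_eq_zero_left ?_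
        rw [CliffordAlgebra.ι_mul_ι_add_swap, horth i j (fun hh => h hh.symm), map_zero]
      rw [← mul_assoc, hanti, neg_mul, mul_assoc, ih, mul_smul_comm, ← neg_one_zsmul,
        smul_smul, pow_succ, mul_comm ((-1 : ℤ) ^ t.countP fun j => decide (j ≠ i)) (-1 : ℤ),
        ← mul_assoc]

/-- Moving a list of generators past another list of generators. -/
lemma prodL_mul_prodL (l₁ l₂ : List (Fin N)) :
    (l₂.map fun j => CliffordAlgebra.ι Q (e j)).prod *
        (l₁.map fun j => CliffordAlgebra.ι Q (e j)).prod =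
      ((-1 : ℤ) ^ ((l₁.map fun i => l₂.countP (fun j => j ≠ i)).sum)) •
        ((l₁.map fun j => CliffordAlgebra.ι Q (e j)).prod *
          (l₂.map fun j => CliffordAlgebra.ι Q (e j)).prod) := by
  induction l₁ with
  | nil => simp
  | cons i t ih =>
    have key := gen_mul_prodL Q e horth i l₂
    have key' : (l₂.map fun j => CliffordAlgebra.ι Q (e j)).prod * CliffordAlgebra.ι Q (e i)
        = ((-1 : ℤ) ^ (l₂.countP (fun j => j ≠ i))) •
          (CliffordAlgebra.ι Q (e i) * (l₂.map fun j => CliffordAlgebra.ι Q (e j)).prod) := by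
      rw [key, smul_smul, ← mul_pow, neg_mul_neg, one_mul, one_pow, one_smul]
    simp only [List.map_cons, List.prod_cons, List.sum_cons]
    rw [← mul_assoc, key', smul_mul_assoc, mul_assoc, ih, mul_smul_comm, smul_smul,
      ← pow_add, ← mul_assoc]

lemma gammaProd_comm (S T : Finset (Fin N)) :
    gammaProd Q e T * gammaProd Q e S =
      ((-1 : ℤ) ^ (((S.sort (· ≤ ·)).map fun i =>
          (T.sort (· ≤ ·)).countP (fun j => j ≠ i)).sum)) •
        (gammaProd Q e S * gammaProd Q e T) :=
  prodL_mul_prodL Q e horth _ _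

omit horth in
lemma exponent_eq (S T : Finset (Fin N)) :
    (S ∩ T).card + (((S.sort (· ≤ ·)).map fun i =>
        (T.sort (· ≤ ·)).countP (fun j => j ≠ i)).sum) = S.card * T.card := by
  have hsum : ∀ (f : Fin N → ℕ),
      ((S.sort (· ≤ ·)).map f).sum = ∑ i ∈ S, f i := by
    intro f
    rw [Finset.sum_eq_multiset_sum, ← Finset.sort_eq S (· ≤ ·), Multiset.map_coe,
      Multiset.sum_coe]
  have hcount : ∀ i : Fin N, (T.sort (· ≤ ·)).countP (fun j => j ≠ i)
      = (T.filter (fun j => j ≠ i)).card := by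
    intro i
    have h1 : Multiset.countP (fun j => j ≠ i) ↑(T.sort (· ≤ ·))
        = Multiset.countP (fun j => j ≠ i) T.val := by
      rw [Finset.sort_eq]
    rw [Multiset.coe_countP] at h1
    rw [h1]
    rw [Multiset.countP_eq_card_filter]
    rfl
  rw [hsum, ← Finset.filter_mem_eq_inter, Finset.card_filter, ← Finset.sum_add_distrib]
  have hterm : ∀ i ∈ S,
      ((if i ∈ T then 1 else 0) + (T.sort (· ≤ ·)).countP (fun j => j ≠ i)) = T.card := by
    intro i _
    rw [hcount i]
    by_cases hiT : i ∈ T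
    · have hfe : T.filter (fun j => j ≠ i) = T.erase i := by
        ext j; simp [Finset.mem_erase, and_comm]
      rw [if_pos hiT, hfe, Finset.card_erase_of_mem hiT]
      have h1 : 1 ≤ T.card := Finset.card_pos.mpr ⟨i, hiT⟩
      omega
    · have hfe : T.filter (fun j => j ≠ i) = T := by
        ext j
        simp only [Finset.mem_filter, ne_eq, and_iff_left_iff_imp]
        rintro hj rfl; exact hiT hj
      rw [if_neg hiT, hfe, zero_add]
  rw [Finset.sum_congr rfl hterm, Finset.sum_const, smul_eq_mul]

end Aux

/-- in `Cl(Q) ⊗ A`, the ℤ₂^N graded bracket of homogeneous basis elements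
reduces to the supercommutator of the second factors. -/
theorem tensor_graded_bracket_eq {R M : Type*} [CommRing R] [AddCommGroup M] [Module R M]
    (Q : QuadraticForm R M) {N : ℕ} (e : Fin N → M)
    (horth : ∀ i j : Fin N, i ≠ j → QuadraticMap.polar Q (e i) (e j) = 0)
    (A : Type*) [Ring A] [Algebra R A] (𝒜 : ZMod 2 → Submodule R A) [GradedAlgebra 𝒜]
    (S T : Finset (Fin N)) (Ta Tb : A)
    (hTa : Ta ∈ 𝒜 ((S.card : ZMod 2))) (hTb : Tb ∈ 𝒜 ((T.card : ZMod 2))) :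
    (gammaProd Q e S ⊗ₜ[R] Ta) * (gammaProd Q e T ⊗ₜ[R] Tb) -
        ((-1 : ℤ) ^ (S ∩ T).card) •
          ((gammaProd Q e T ⊗ₜ[R] Tb) * (gammaProd Q e S ⊗ₜ[R] Ta)) =
      (gammaProd Q e S * gammaProd Q e T) ⊗ₜ[R]
        (Ta * Tb - ((-1 : ℤ) ^ (S.card * T.card)) • (Tb * Ta)) := by
  rw [Algebra.TensorProduct.tmul_mul_tmul, Algebra.TensorProduct.tmul_mul_tmul,
    gammaProd_comm Q e horth S T, TensorProduct.smul_tmul, TensorProduct.tmul_smul,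
    smul_smul, ← pow_add, exponent_eq S T, TensorProduct.tmul_sub,
    TensorProduct.tmul_smul]
end

section
/- Assume in addition that Q(e i) = 1 or Q(e i) = -1 for every i. Let S, T be finite subsets of Fin N and let T_a, T_b ∈ A be homogeneous with T_a ∈ 𝒜(|S| mod 2) and T_b ∈ 𝒜(|T| mod 2). Then there exists κ ∈ R with κ = 1 or κ = -1 such that (γ_S ⊗ T_a)·(γ_T ⊗ T_b) - (-1)^{|S ∩ T|} · (γ_T ⊗ T_b)·(γ_S ⊗ T_a) = κ • (γ_{S Δ T} ⊗ (T_a·T_b - (-1)^{|S|·|T|} · T_b·T_a)), where S Δ T is the symmetric difference; in particular the graded bracket of two homogeneous basis elements is again of the form γ_{S Δ T} ⊗ (homogeneous element of parity |S Δ T| mod 2), so the ℤ₂^N grading is respected. -/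
open TensorProduct

open Finset in
/-- multiset splitting of a finset at a member -/
lemma sort_split_mem {N : ℕ} (O : Finset (Fin N)) (i : Fin N) (hi : i ∈ O) :
    O.sort (· ≤ ·) =
      ((O.filter (· < i)).sort (· ≤ ·)) ++ i :: ((O.filter (i < ·)).sort (· ≤ ·)) := by
  refine (fun hp hs => (List.Perm.eq_of_pairwise' (r := ((· ≤ ·) : Fin N → Fin N → Prop)) hs (Finset.pairwise_sort _ _) hp).symm) ?_ ?_
  · rw [← Multiset.coe_eq_coe]
    have key : O.val = ↑((O.filter (· < i)).sort (· ≤ ·)) + (i ::ₘ ↑((O.filter (i < ·)).sort (· ≤ ·))) := by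
      rw [Finset.sort_eq, Finset.sort_eq, Finset.filter_val, Finset.filter_val]
      have h2 : i ::ₘ Multiset.filter (fun j => i < j) O.val
          = Multiset.filter (fun j => ¬ j < i) O.val := by
        refine Multiset.ext.mpr fun a => ?_
        rw [Multiset.count_cons, Multiset.count_filter, Multiset.count_filter]
        by_cases hai : a = i
        · subst hai
          simp [Multiset.count_eq_one_of_mem O.nodup hi]
        · have hiff : (i < a) ↔ ¬ a < i := by
            constructor
            · exact fun h => not_lt.mpr h.le
            · intro h; exact lt_of_le_of_ne (not_lt.mp h) (Ne.symm hai)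
          simp [hai, hiff]
      rw [h2, Multiset.filter_add_not]
    rw [Finset.sort_eq, key, Multiset.cons_coe, Multiset.coe_add]
  · rw [List.pairwise_append]
    refine ⟨Finset.pairwise_sort _ _, ?_, ?_⟩
    · rw [List.pairwise_cons]
      refine ⟨fun b hb => ?_, Finset.pairwise_sort _ _⟩
      have := (Finset.mem_sort (α := Fin N) (· ≤ ·)).mp hb
      exact (Finset.mem_filter.mp this).2.le
    · intro a ha b hb
      have ha' := Finset.mem_filter.mp ((Finset.mem_sort (α := Fin N) (· ≤ ·)).mp ha)
      rcases List.mem_cons.mp hb with rfl | hb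
      · exact ha'.2.le
      · have hb' := Finset.mem_filter.mp ((Finset.mem_sort (α := Fin N) (· ≤ ·)).mp hb)
        exact (ha'.2.trans hb'.2).le

lemma sort_split_not_mem {N : ℕ} (O : Finset (Fin N)) (i : Fin N) (hi : i ∉ O) :
    O.sort (· ≤ ·) =
      ((O.filter (· < i)).sort (· ≤ ·)) ++ ((O.filter (i < ·)).sort (· ≤ ·)) := by
  refine (fun hp hs => (List.Perm.eq_of_pairwise' (r := ((· ≤ ·) : Fin N → Fin N → Prop)) hs (Finset.pairwise_sort _ _) hp).symm) ?_ ?_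
  · rw [← Multiset.coe_eq_coe]
    have key : O.val = ↑((O.filter (· < i)).sort (· ≤ ·)) + ↑((O.filter (i < ·)).sort (· ≤ ·)) := by
      rw [Finset.sort_eq, Finset.sort_eq, Finset.filter_val, Finset.filter_val]
      have h2 : Multiset.filter (i < ·) O.val
          = Multiset.filter (fun j => ¬ j < i) O.val := by
        apply Multiset.filter_congr
        intro j hj
        have : j ≠ i := by rintro rfl; exact hi hj
        constructor
        · exact fun h => not_lt.mpr h.le
        · intro h; exact lt_of_le_of_ne (not_lt.mp h) (Ne.symm this)
      rw [h2, Multiset.filter_add_not]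
    rw [Finset.sort_eq, key, Multiset.coe_add]
  · rw [List.pairwise_append]
    refine ⟨Finset.pairwise_sort _ _, Finset.pairwise_sort _ _, ?_⟩
    intro a ha b hb
    have ha' := Finset.mem_filter.mp ((Finset.mem_sort (α := Fin N) (· ≤ ·)).mp ha)
    have hb' := Finset.mem_filter.mp ((Finset.mem_sort (α := Fin N) (· ≤ ·)).mp hb)
    exact (ha'.2.trans hb'.2).le

section cliff

variable {R M : Type*} [CommRing R] [AddCommGroup M] [Module R M]
    (Q : QuadraticForm R M) {N : ℕ} (e : Fin N → M)
    (horth : ∀ i j : Fin N, i ≠ j → QuadraticMap.polar Q (e i) (e j) = 0)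

include horth

lemma ff_anti (i j : Fin N) (h : i ≠ j) :
    CliffordAlgebra.ι Q (e i) * CliffordAlgebra.ι Q (e j)
      = - (CliffordAlgebra.ι Q (e j) * CliffordAlgebra.ι Q (e i)) := by
  have h2 := CliffordAlgebra.ι_mul_ι_add_swap (Q := Q) (e i) (e j)
  rw [horth i j h, map_zero] at h2
  exact eq_neg_of_add_eq_zero_left h2

lemma comm_list (i : Fin N) (l : List (Fin N)) :
    CliffordAlgebra.ι Q (e i) * (l.map fun j => CliffordAlgebra.ι Q (e j)).prod
      = ((-1 : R) ^ (l.countP (· ≠ i))) •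
        ((l.map fun j => CliffordAlgebra.ι Q (e j)).prod * CliffordAlgebra.ι Q (e i)) := by
  induction l with
  | nil => simp
  | cons j l ih =>
    rw [List.map_cons, List.prod_cons]
    by_cases hji : j = i
    · subst hji
      have hc : List.countP (· ≠ j) (j :: l) = List.countP (· ≠ j) l := by
        simp [List.countP_cons]
      rw [hc]
      conv_lhs => rw [ih]
      rw [mul_smul_comm, ← mul_assoc]
    · have hc : List.countP (· ≠ i) (j :: l) = List.countP (· ≠ i) l + 1 := by
        simp [List.countP_cons, hji]
      rw [hc, ← mul_assoc, ff_anti Q e horth i j (Ne.symm hji), neg_mul, mul_assoc, ih,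
        mul_smul_comm, ← mul_assoc, ← neg_smul, pow_succ]
      congr 1
      ring

lemma step_lemma (hnorm : ∀ i : Fin N, Q (e i) = 1 ∨ Q (e i) = -1)
    (i : Fin N) (O : Finset (Fin N)) :
    ∃ κ : R, (κ = 1 ∨ κ = -1) ∧
      CliffordAlgebra.ι Q (e i) * gammaProd Q e O
        = κ • gammaProd Q e (symmDiff {i} O) := by
  classical
  set A := ((O.filter (· < i)).sort (· ≤ ·)) with hA
  set B := ((O.filter (i < ·)).sort (· ≤ ·)) with hB
  have hAne : ∀ j ∈ A, j ≠ i := by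
    intro j hj
    have := Finset.mem_filter.mp ((Finset.mem_sort (α := Fin N) (· ≤ ·)).mp hj)
    exact ne_of_lt this.2
  have hcount : A.countP (· ≠ i) = A.length := by
    rw [List.countP_eq_length]
    intro j hj
    simp [hAne j hj]
  by_cases hi : i ∈ O
  · -- erase case
    have hsd : symmDiff {i} O = O.erase i := by
      ext a
      simp [Finset.mem_symmDiff, Finset.mem_erase]
      by_cases ha : a = i <;> simp [ha, hi] <;> tauto
    have hsplit : gammaProd Q e O =
        (A.map fun j => CliffordAlgebra.ι Q (e j)).prod *
          (CliffordAlgebra.ι Q (e i) *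
            (B.map fun j => CliffordAlgebra.ι Q (e j)).prod) := by
      rw [gammaProd, sort_split_mem O i hi, List.map_append, List.prod_append,
        List.map_cons, List.prod_cons]
    have herase : gammaProd Q e (O.erase i) =
        (A.map fun j => CliffordAlgebra.ι Q (e j)).prod *
          (B.map fun j => CliffordAlgebra.ι Q (e j)).prod := by
      rw [gammaProd, sort_split_not_mem (O.erase i) i (Finset.notMem_erase i O)]
      have e1 : (O.erase i).filter (· < i) = O.filter (· < i) := by
        ext a; simp [Finset.mem_erase, Finset.mem_filter]
        intro h; exact fun _ => ne_of_lt h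
      have e2 : (O.erase i).filter (i < ·) = O.filter (i < ·) := by
        ext a; simp [Finset.mem_erase, Finset.mem_filter]
        intro h; exact fun _ => (ne_of_lt h).symm
      rw [e1, e2, List.map_append, List.prod_append]
    refine ⟨(-1 : R) ^ A.length * Q (e i), ?_, ?_⟩
    · rcases Nat.even_or_odd A.length with hev | hod
      · rw [hev.neg_one_pow, one_mul]; exact hnorm i
      · rw [hod.neg_one_pow]
        rcases hnorm i with h | h <;> rw [h] <;> simp
    · rw [hsplit, ← mul_assoc, comm_list Q e horth i A, hcount, smul_mul_assoc,
        mul_assoc ((A.map fun j => CliffordAlgebra.ι Q (e j)).prod),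
        ← mul_assoc (CliffordAlgebra.ι Q (e i)) (CliffordAlgebra.ι Q (e i)),
        CliffordAlgebra.ι_sq_scalar, ← Algebra.smul_def, mul_smul_comm, smul_smul,
        hsd, herase]
  · -- insert case
    have hsd : symmDiff {i} O = insert i O := by
      ext a
      simp [Finset.mem_symmDiff, Finset.mem_insert]
      by_cases ha : a = i <;> simp [ha, hi] <;> tauto
    have hsplit : gammaProd Q e O =
        (A.map fun j => CliffordAlgebra.ι Q (e j)).prod *
          (B.map fun j => CliffordAlgebra.ι Q (e j)).prod := by
      rw [gammaProd, sort_split_not_mem O i hi, List.map_append, List.prod_append]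
    have hins : gammaProd Q e (insert i O) =
        (A.map fun j => CliffordAlgebra.ι Q (e j)).prod *
          (CliffordAlgebra.ι Q (e i) *
            (B.map fun j => CliffordAlgebra.ι Q (e j)).prod) := by
      rw [gammaProd, sort_split_mem (insert i O) i (Finset.mem_insert_self i O)]
      have e1 : (insert i O).filter (· < i) = O.filter (· < i) := by
        rw [Finset.filter_insert, if_neg (lt_irrefl i)]
      have e2 : (insert i O).filter (i < ·) = O.filter (i < ·) := by
        rw [Finset.filter_insert, if_neg (lt_irrefl i)]
      rw [e1, e2, List.map_append, List.prod_append, List.map_cons, List.prod_cons]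
    refine ⟨(-1 : R) ^ A.length, ?_, ?_⟩
    · rcases Nat.even_or_odd A.length with hev | hod
      · exact Or.inl hev.neg_one_pow
      · exact Or.inr hod.neg_one_pow
    · rw [hsplit, ← mul_assoc, comm_list Q e horth i A, hcount]
      rw [smul_mul_assoc, mul_assoc, hsd, hins]

end cliff

lemma countP_sort {N : ℕ} (S : Finset (Fin N)) (i : Fin N) :
    (S.sort (· ≤ ·)).countP (· ≠ i) = (S.erase i).card := by
  have h1 : Multiset.countP (fun j => j ≠ i) (↑(S.sort (· ≤ ·))) =
      (S.sort (· ≤ ·)).countP (· ≠ i) := Multiset.coe_countP _ _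
  rw [← h1, Finset.sort_eq, Multiset.countP_eq_card_filter, ← Finset.filter_val,
    Finset.filter_ne', Finset.card]

lemma sum_sort {N : ℕ} (T : Finset (Fin N)) (g : Fin N → ℕ) :
    ((T.sort (· ≤ ·)).map g).sum = ∑ i ∈ T, g i := by
  have hp : ((T.sort (· ≤ ·)).map g).Perm (T.toList.map g) :=
    (Finset.sort_perm_toList T (· ≤ ·)).map g
  rw [hp.sum_eq, ← Multiset.sum_coe, ← Multiset.map_coe, Finset.coe_toList, Finset.sum]

lemma exp_parity {N : ℕ} (S T : Finset (Fin N)) :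
    (∑ i ∈ T, (S.erase i).card) + (S ∩ T).card = S.card * T.card := by
  have h1 : ∑ i ∈ T, ((S.erase i).card + if i ∈ S then 1 else 0) = T.card * S.card := by
    have hterm : ∀ i ∈ T, ((S.erase i).card + if i ∈ S then 1 else 0) = S.card := by
      intro i _
      by_cases h : i ∈ S
      · rw [if_pos h, Finset.card_erase_of_mem h]
        have := Finset.card_pos.mpr ⟨i, h⟩
        omega
      · rw [if_neg h, Finset.erase_eq_of_notMem h, add_zero]
    rw [Finset.sum_congr rfl hterm, Finset.sum_const, smul_eq_mul]
  rw [Finset.sum_add_distrib] at h1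
  have h2 : (∑ i ∈ T, if i ∈ S then 1 else 0) = (S ∩ T).card := by
    rw [Finset.sum_ite_mem, Finset.sum_const, smul_eq_mul, mul_one, Finset.inter_comm]
  rw [h2] at h1
  rw [mul_comm S.card T.card]
  omega

lemma zsmul_conv {R : Type*} [CommRing R] {V : Type*} [AddCommGroup V] [Module R V]
    (n : ℕ) (x : V) : ((-1 : ℤ) ^ n) • x = ((-1 : R) ^ n) • x := by
  rw [← Int.cast_smul_eq_zsmul R]
  norm_cast

lemma card_symmDiff' {N : ℕ} (S T : Finset (Fin N)) :
    (symmDiff S T).card + 2 * (S ∩ T).card = S.card + T.card := by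
  classical
  rw [symmDiff_def, Finset.sup_eq_union,
    Finset.card_union_of_disjoint disjoint_sdiff_sdiff]
  have a1 := Finset.card_sdiff_add_card_inter S T
  have a2 := Finset.card_sdiff_add_card_inter T S
  rw [Finset.inter_comm] at a2
  omega

lemma count_sort {N : ℕ} (S : Finset (Fin N)) (a : Fin N) :
    (S.sort (· ≤ ·)).count a = if a ∈ S then 1 else 0 := by
  rw [← Multiset.coe_count, Finset.sort_eq]
  by_cases h : a ∈ S
  · rw [if_pos h, Multiset.count_eq_one_of_mem S.nodup (Finset.mem_def.mp h)]
  · rw [if_neg h, Multiset.count_eq_zero_of_notMem]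
    exact fun hc => h (Finset.mem_def.mpr hc)

section cliff2

variable {R M : Type*} [CommRing R] [AddCommGroup M] [Module R M]
    (Q : QuadraticForm R M) {N : ℕ} (e : Fin N → M)
    (horth : ∀ i j : Fin N, i ≠ j → QuadraticMap.polar Q (e i) (e j) = 0)

include horth

lemma comm_prods (m l : List (Fin N)) :
    (m.map fun j => CliffordAlgebra.ι Q (e j)).prod *
        (l.map fun j => CliffordAlgebra.ι Q (e j)).prod
      = ((-1 : R) ^ ((m.map fun i => l.countP (· ≠ i)).sum)) •
        ((l.map fun j => CliffordAlgebra.ι Q (e j)).prod *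
          (m.map fun j => CliffordAlgebra.ι Q (e j)).prod) := by
  induction m with
  | nil => simp
  | cons j m ih =>
    rw [List.map_cons, List.prod_cons, List.map_cons, List.sum_cons, mul_assoc, ih,
      mul_smul_comm, ← mul_assoc, comm_list Q e horth j l, smul_mul_assoc, smul_smul]
    congr 1
    · rw [← pow_add, Nat.add_comm]
    · rw [mul_assoc]

lemma oddset_cons (j : Fin N) (l : List (Fin N)) :
    Finset.filter (fun i => ¬ Even ((j :: l).count i)) Finset.univ
      = symmDiff {j} (Finset.filter (fun i => ¬ Even (l.count i)) Finset.univ) := by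
  ext a
  simp only [Finset.mem_filter, Finset.mem_univ, true_and, Finset.mem_symmDiff,
    Finset.mem_singleton, List.count_cons]
  by_cases ha : a = j
  · subst ha; simp [Nat.even_add_one]
  · simp [ha, Ne.symm ha]

lemma master_lemma (hnorm : ∀ i : Fin N, Q (e i) = 1 ∨ Q (e i) = -1)
    (l : List (Fin N)) :
    ∃ κ : R, (κ = 1 ∨ κ = -1) ∧
      (l.map fun j => CliffordAlgebra.ι Q (e j)).prod
        = κ • gammaProd Q e (Finset.filter (fun i => ¬ Even (l.count i)) Finset.univ) := by
  induction l with
  | nil =>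
    refine ⟨1, Or.inl rfl, ?_⟩
    simp [gammaProd]
  | cons j l ih =>
    obtain ⟨κ₁, hκ₁, h1⟩ := ih
    obtain ⟨κ₂, hκ₂, h2⟩ := step_lemma Q e horth hnorm j
      (Finset.filter (fun i => ¬ Even (l.count i)) Finset.univ)
    refine ⟨κ₂ * κ₁, ?_, ?_⟩
    · rcases hκ₁ with rfl | rfl <;> rcases hκ₂ with rfl | rfl <;> simp
    · rw [List.map_cons, List.prod_cons, h1, mul_smul_comm, h2, oddset_cons Q e horth,
        smul_smul, mul_comm κ₁ κ₂]

lemma gamma_mul (hnorm : ∀ i : Fin N, Q (e i) = 1 ∨ Q (e i) = -1) (S T : Finset (Fin N)) :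
    ∃ κ : R, (κ = 1 ∨ κ = -1) ∧
      gammaProd Q e S * gammaProd Q e T = κ • gammaProd Q e (symmDiff S T) := by
  obtain ⟨κ, hκ, h⟩ := master_lemma Q e horth hnorm (S.sort (· ≤ ·) ++ T.sort (· ≤ ·))
  refine ⟨κ, hκ, ?_⟩
  have hset : Finset.filter
      (fun i => ¬ Even ((S.sort (· ≤ ·) ++ T.sort (· ≤ ·)).count i)) Finset.univ
      = symmDiff S T := by
    ext a
    simp only [Finset.mem_filter, Finset.mem_univ, true_and, List.count_append,
      count_sort, Finset.mem_symmDiff]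
    by_cases hs : a ∈ S <;> by_cases ht : a ∈ T <;> simp [hs, ht]
  rw [hset] at h
  rw [gammaProd, gammaProd, ← List.prod_append, ← List.map_append, h]

end cliff2

/-- if moreover `Q (e i) = ±1` for all `i`, the graded bracket of two
homogeneous basis elements of `Cl(Q) ⊗ A` equals `κ • (γ_{S Δ T} ⊗ supercommutator)`
with `κ = ±1`, and the supercommutator is homogeneous of parity `|S Δ T| mod 2`,
so the ℤ₂^N grading is respected. -/
theorem tensor_graded_bracket_respects_grading {R M : Type*} [CommRing R] [AddCommGroup M]
    [Module R M] (Q : QuadraticForm R M) {N : ℕ} (e : Fin N → M)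
    (horth : ∀ i j : Fin N, i ≠ j → QuadraticMap.polar Q (e i) (e j) = 0)
    (hnorm : ∀ i : Fin N, Q (e i) = 1 ∨ Q (e i) = -1)
    (A : Type*) [Ring A] [Algebra R A] (𝒜 : ZMod 2 → Submodule R A) [GradedAlgebra 𝒜]
    (S T : Finset (Fin N)) (Ta Tb : A)
    (hTa : Ta ∈ 𝒜 ((S.card : ZMod 2))) (hTb : Tb ∈ 𝒜 ((T.card : ZMod 2))) :
    ∃ κ : R, (κ = 1 ∨ κ = -1) ∧
      (gammaProd Q e S ⊗ₜ[R] Ta) * (gammaProd Q e T ⊗ₜ[R] Tb) -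
          ((-1 : ℤ) ^ (S ∩ T).card) •
            ((gammaProd Q e T ⊗ₜ[R] Tb) * (gammaProd Q e S ⊗ₜ[R] Ta)) =
        κ • (gammaProd Q e (symmDiff S T) ⊗ₜ[R]
          (Ta * Tb - ((-1 : ℤ) ^ (S.card * T.card)) • (Tb * Ta))) ∧
      (Ta * Tb - ((-1 : ℤ) ^ (S.card * T.card)) • (Tb * Ta)) ∈
        𝒜 (((symmDiff S T).card : ZMod 2)) := by
  classical
  obtain ⟨κ, hκ, hST⟩ := gamma_mul Q e horth hnorm S T
  -- commutation relation
  have hTS : gammaProd Q e T * gammaProd Q e S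
      = ((-1 : R) ^ (S.card * T.card + (S ∩ T).card)) •
        (gammaProd Q e S * gammaProd Q e T) := by
    have h := comm_prods Q e horth (T.sort (· ≤ ·)) (S.sort (· ≤ ·))
    have hK : (((T.sort (· ≤ ·)).map fun i => (S.sort (· ≤ ·)).countP (· ≠ i))).sum
        = ∑ i ∈ T, (S.erase i).card := by
      have hm : ((T.sort (· ≤ ·)).map fun i => (S.sort (· ≤ ·)).countP (· ≠ i))
          = ((T.sort (· ≤ ·)).map fun i => (S.erase i).card) := by
        congr 1
        funext i
        exact countP_sort S i
      rw [hm, sum_sort]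
    have hpar : (-1 : R) ^ ((∑ i ∈ T, (S.erase i).card))
        = (-1 : R) ^ (S.card * T.card + (S ∩ T).card) := by
      have h2 := exp_parity S T
      have h3 : S.card * T.card + (S ∩ T).card
          = (∑ i ∈ T, (S.erase i).card) + 2 * (S ∩ T).card := by omega
      rw [h3, pow_add, pow_mul]
      simp
    rw [hK, hpar] at h
    exact h
  -- cardinality mod 2
  have hcard : (((symmDiff S T).card : ZMod 2)) = ((S.card : ZMod 2)) + ((T.card : ZMod 2)) := by
    have h1 := card_symmDiff' S T
    have h2 := congrArg (fun n : ℕ => (n : ZMod 2)) h1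
    push_cast at h2
    have h3 : (2 : ZMod 2) = 0 := by decide
    rw [h3] at h2
    simpa using h2
  have hmem : (Ta * Tb - ((-1 : ℤ) ^ (S.card * T.card)) • (Tb * Ta)) ∈
      𝒜 (((symmDiff S T).card : ZMod 2)) := by
    rw [hcard]
    refine Submodule.sub_mem _ (SetLike.mul_mem_graded hTa hTb) (zsmul_mem ?_ _)
    rw [add_comm]
    exact SetLike.mul_mem_graded hTb hTa
  refine ⟨κ, hκ, ?_, hmem⟩
  rw [Algebra.TensorProduct.tmul_mul_tmul, Algebra.TensorProduct.tmul_mul_tmul,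
    zsmul_conv (R := R) ((S ∩ T).card), zsmul_conv (R := R) (S.card * T.card),
    hTS, hST]
  rw [TensorProduct.tmul_sub, TensorProduct.tmul_smul, smul_sub,
    ← TensorProduct.smul_tmul', ← TensorProduct.smul_tmul', ← TensorProduct.smul_tmul',
    smul_smul, smul_smul, smul_smul]
  congr 1
  congr 1
  have h2 : ((-1 : R) ^ (S ∩ T).card) * ((-1 : R) ^ (S ∩ T).card) = 1 := by
    rw [← pow_add]
    exact Even.neg_one_pow ⟨(S ∩ T).card, rfl⟩
  rw [pow_add]
  linear_combination ((-1 : R) ^ (S.card * T.card) * κ) * h2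
end

section
/- For all indices i, j, k in Fin n, the (0,0)-(1,0) sector relations hold: [A_ij, β†_k] = δ_ik · β_j + δ_jk · β_i, [A†_ij, β_k] = -δ_ik · β†_j - δ_jk · β†_i, [N_ij, β_k] = -δ_ik · β_j, and [N_ij, β†_k] = δ_jk · β†_i. -/
/-- `A_ij := ½{a_i, a_j}` (also used for `A†_ij := ½{a†_i, a†_j}`). -/
noncomputable def bosonA {R : Type*} [Ring R] [Algebra ℚ R] {n : ℕ}
    (a : Fin n → R) (i j : Fin n) : R :=
  (1 / 2 : ℚ) • (a i * a j + a j * a i)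

/-- `N_ij := ½{a†_i, a_j}`. -/
noncomputable def bosonN {R : Type*} [Ring R] [Algebra ℚ R] {n : ℕ}
    (ad a : Fin n → R) (i j : Fin n) : R :=
  (1 / 2 : ℚ) • (ad i * a j + a j * ad i)

/-- `β_i := ½{a_i, F}`. -/
noncomputable def bosonBeta {R : Type*} [Ring R] [Algebra ℚ R] {n : ℕ}
    (a : Fin n → R) (F : R) (i : Fin n) : R :=
  (1 / 2 : ℚ) • (a i * F + F * a i)

/-- the (0,0)-(1,0) sector relations:
`[A_ij, β†_k] = δ_ik β_j + δ_jk β_i`, `[A†_ij, β_k] = -δ_ik β†_j - δ_jk β†_i`,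
`[N_ij, β_k] = -δ_ik β_j`, `[N_ij, β†_k] = δ_jk β†_i`. -/
theorem boson_zero_zero_one_zero_sector {R : Type*} [Ring R] [Algebra ℚ R] {n : ℕ}
    (a ad : Fin n → R) (F : R)
    (haa : ∀ i j, a i * a j = a j * a i)
    (hadad : ∀ i j, ad i * ad j = ad j * ad i)
    (haad : ∀ i j, a i * ad j - ad j * a i = if i = j then 1 else 0)
    (hFF : F * F = 1)
    (hFa : ∀ i, F * a i = a i * F)
    (hFad : ∀ i, F * ad i = ad i * F)
    (i j k : Fin n) :
    (bosonA a i j * bosonBeta ad F k - bosonBeta ad F k * bosonA a i j =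
        (if i = k then bosonBeta a F j else 0) + (if j = k then bosonBeta a F i else 0)) ∧
      (bosonA ad i j * bosonBeta a F k - bosonBeta a F k * bosonA ad i j =
        -(if i = k then bosonBeta ad F j else 0) - (if j = k then bosonBeta ad F i else 0)) ∧
      (bosonN ad a i j * bosonBeta a F k - bosonBeta a F k * bosonN ad a i j =
        -(if i = k then bosonBeta a F j else 0)) ∧
      (bosonN ad a i j * bosonBeta ad F k - bosonBeta ad F k * bosonN ad a i j =
        (if j = k then bosonBeta ad F i else 0)) := by
  have swap1 : ∀ p q, a p * ad q = ad q * a p + (if p = q then 1 else 0) := by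
    intro p q; rw [← haad p q]; noncomm_ring
  have swap2 : ∀ p q, ad p * a q = a q * ad p - (if p = q then 1 else 0) := by
    intro p q
    rw [show (if p = q then (1:R) else 0) = if q = p then 1 else 0 by simp [eq_comm],
      ← haad q p]
    noncomm_ring
  have hFmul : ∀ x y : R, F * x = x * F → F * y = y * F → F * (x * y) = (x * y) * F := by
    intro x y hx hy; rw [← mul_assoc, hx, mul_assoc, hy, ← mul_assoc]
  have key : ∀ X y : R, F * X = X * F → X * (y * F) - (y * F) * X = (X * y - y * X) * F := by
    intro X y hX
    rw [mul_assoc y F X, hX, ← mul_assoc y X F, ← mul_assoc X y F, sub_mul]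
  have halves : ∀ x : R, (1 / 2 : ℚ) • (x + x) = x := by
    intro x; rw [← two_smul ℚ x, smul_smul]; norm_num
  have hb : ∀ m, bosonBeta a F m = a m * F := by
    intro m; unfold bosonBeta; rw [hFa m, halves]
  have hbd : ∀ m, bosonBeta ad F m = ad m * F := by
    intro m; unfold bosonBeta; rw [hFad m, halves]
  refine ⟨?_, ?_, ?_, ?_⟩
  · have C1 : (a i * a j + a j * a i) * ad k - ad k * (a i * a j + a j * a i) =
        ((if i = k then a j else 0) + (if j = k then a i else 0)) +
        ((if i = k then a j else 0) + (if j = k then a i else 0)) := by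
      rw [add_mul, mul_add, mul_assoc (a i), swap1 j k, mul_assoc (a j), swap1 i k,
        mul_add (a i), mul_add (a j), ← mul_assoc (a i) (ad k), swap1 i k,
        ← mul_assoc (a j) (ad k), swap1 j k]
      split_ifs <;> noncomm_ring
    have hX : F * (a i * a j + a j * a i) = (a i * a j + a j * a i) * F := by
      rw [mul_add, add_mul, hFmul _ _ (hFa i) (hFa j), hFmul _ _ (hFa j) (hFa i)]
    simp only [bosonA, hb, hbd, smul_mul_assoc, mul_smul_comm, ← smul_sub]
    rw [key _ _ hX, C1, add_mul, halves]
    split_ifs <;> noncomm_ring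
  · have C2 : (ad i * ad j + ad j * ad i) * a k - a k * (ad i * ad j + ad j * ad i) =
        (-(if i = k then ad j else 0) - (if j = k then ad i else 0)) +
        (-(if i = k then ad j else 0) - (if j = k then ad i else 0)) := by
      rw [add_mul, mul_add, mul_assoc (ad i), swap2 j k, mul_assoc (ad j), swap2 i k,
        mul_sub (ad i), mul_sub (ad j), ← mul_assoc (ad i) (a k), swap2 i k,
        ← mul_assoc (ad j) (a k), swap2 j k]
      split_ifs <;> noncomm_ring
    have hX : F * (ad i * ad j + ad j * ad i) = (ad i * ad j + ad j * ad i) * F := by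
      rw [mul_add, add_mul, hFmul _ _ (hFad i) (hFad j), hFmul _ _ (hFad j) (hFad i)]
    simp only [bosonA, hb, hbd, smul_mul_assoc, mul_smul_comm, ← smul_sub]
    rw [key _ _ hX, C2, add_mul, halves]
    split_ifs <;> noncomm_ring
  · have C3 : (ad i * a j + a j * ad i) * a k - a k * (ad i * a j + a j * ad i) =
        (-(if i = k then a j else 0)) + (-(if i = k then a j else 0)) := by
      rw [add_mul, mul_add, mul_assoc (ad i) (a j) (a k), haa j k,
        ← mul_assoc (ad i) (a k) (a j), swap2 i k, mul_assoc (a j) (ad i) (a k), swap2 i k,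
        mul_sub (a j), ← mul_assoc (a j) (a k) (ad i), haa j k,
        ← mul_assoc (a k) (ad i) (a j), ← mul_assoc (a k) (a j) (ad i)]
      split_ifs <;> noncomm_ring
    have hX : F * (ad i * a j + a j * ad i) = (ad i * a j + a j * ad i) * F := by
      rw [mul_add, add_mul, hFmul _ _ (hFad i) (hFa j), hFmul _ _ (hFa j) (hFad i)]
    simp only [bosonN, hb, hbd, smul_mul_assoc, mul_smul_comm, ← smul_sub]
    rw [key _ _ hX, C3, add_mul, halves]
    split_ifs <;> noncomm_ring
  · have C4 : (ad i * a j + a j * ad i) * ad k - ad k * (ad i * a j + a j * ad i) =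
        (if j = k then ad i else 0) + (if j = k then ad i else 0) := by
      rw [add_mul, mul_add, mul_assoc (ad i) (a j) (ad k), swap1 j k,
        mul_add (ad i), ← mul_assoc (ad i) (ad k) (a j), hadad i k,
        mul_assoc (a j) (ad i) (ad k), hadad i k, ← mul_assoc (a j) (ad k) (ad i),
        swap1 j k, ← mul_assoc (ad k) (ad i) (a j), ← mul_assoc (ad k) (a j) (ad i)]
      split_ifs <;> noncomm_ring
    have hX : F * (ad i * a j + a j * ad i) = (ad i * a j + a j * ad i) * F := by
      rw [mul_add, add_mul, hFmul _ _ (hFad i) (hFa j), hFmul _ _ (hFa j) (hFad i)]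
    simp only [bosonN, hb, hbd, smul_mul_assoc, mul_smul_comm, ← smul_sub]
    rw [key _ _ hX, C4, add_mul, halves]
    split_ifs <;> noncomm_ring
end

section
/- The ℤ₂ ⊗ ℤ₂ extended Grassmann numbers realized via the Clifford algebra supercommute with the correct color signs: for all u, v ∈ V, (i) {g₁ ⊗ ι(u), g₁ ⊗ ι(v)} = 0 and {g₂ ⊗ ι(u), g₂ ⊗ ι(v)} = 0 (two elements of degree (1,0), resp. two of degree (0,1), anticommute); (ii) [g₁ ⊗ ι(u), g₂ ⊗ ι(v)] = 0 (a degree (1,0) element commutes with a degree (0,1) element); (iii) {g₁ ⊗ ι(u), (g₁·g₂) ⊗ 1} = 0 and {g₂ ⊗ ι(u), (g₁·g₂) ⊗ 1} = 0 (degree (1,0) and (0,1) elements anticommute with the degree (1,1) element g₁g₂ ⊗ 1). Here all products are taken in Cl(Q) ⊗_ℝ Λ(V), [x, y] := x·y - y·x and {x, y} := x·y + y·x. -/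
open TensorProduct

/-- the ℤ₂⊗ℤ₂ extended Grassmann numbers realized in `Cl(Q) ⊗ Λ(V)`
supercommute with the correct color signs. -/
theorem extended_grassmann_color_relations {M : Type*} [AddCommGroup M] [Module ℝ M]
    (Q : QuadraticForm ℝ M) (g₁ g₂ : M) (horth : QuadraticMap.polar Q g₁ g₂ = 0)
    {V : Type*} [AddCommGroup V] [Module ℝ V] (u v : V) :
    ((CliffordAlgebra.ι Q g₁ ⊗ₜ[ℝ] ExteriorAlgebra.ι ℝ u) *
          (CliffordAlgebra.ι Q g₁ ⊗ₜ[ℝ] ExteriorAlgebra.ι ℝ v) +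
        (CliffordAlgebra.ι Q g₁ ⊗ₜ[ℝ] ExteriorAlgebra.ι ℝ v) *
          (CliffordAlgebra.ι Q g₁ ⊗ₜ[ℝ] ExteriorAlgebra.ι ℝ u) = 0) ∧
      ((CliffordAlgebra.ι Q g₂ ⊗ₜ[ℝ] ExteriorAlgebra.ι ℝ u) *
            (CliffordAlgebra.ι Q g₂ ⊗ₜ[ℝ] ExteriorAlgebra.ι ℝ v) +
          (CliffordAlgebra.ι Q g₂ ⊗ₜ[ℝ] ExteriorAlgebra.ι ℝ v) *
            (CliffordAlgebra.ι Q g₂ ⊗ₜ[ℝ] ExteriorAlgebra.ι ℝ u) = 0) ∧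
      ((CliffordAlgebra.ι Q g₁ ⊗ₜ[ℝ] ExteriorAlgebra.ι ℝ u) *
            (CliffordAlgebra.ι Q g₂ ⊗ₜ[ℝ] ExteriorAlgebra.ι ℝ v) -
          (CliffordAlgebra.ι Q g₂ ⊗ₜ[ℝ] ExteriorAlgebra.ι ℝ v) *
            (CliffordAlgebra.ι Q g₁ ⊗ₜ[ℝ] ExteriorAlgebra.ι ℝ u) = 0) ∧
      ((CliffordAlgebra.ι Q g₁ ⊗ₜ[ℝ] ExteriorAlgebra.ι ℝ u) *
            ((CliffordAlgebra.ι Q g₁ * CliffordAlgebra.ι Q g₂) ⊗ₜ[ℝ]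
              (1 : ExteriorAlgebra ℝ V)) +
          ((CliffordAlgebra.ι Q g₁ * CliffordAlgebra.ι Q g₂) ⊗ₜ[ℝ]
              (1 : ExteriorAlgebra ℝ V)) *
            (CliffordAlgebra.ι Q g₁ ⊗ₜ[ℝ] ExteriorAlgebra.ι ℝ u) = 0) ∧
      ((CliffordAlgebra.ι Q g₂ ⊗ₜ[ℝ] ExteriorAlgebra.ι ℝ u) *
            ((CliffordAlgebra.ι Q g₁ * CliffordAlgebra.ι Q g₂) ⊗ₜ[ℝ]
              (1 : ExteriorAlgebra ℝ V)) +
          ((CliffordAlgebra.ι Q g₁ * CliffordAlgebra.ι Q g₂) ⊗ₜ[ℝ]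
              (1 : ExteriorAlgebra ℝ V)) *
            (CliffordAlgebra.ι Q g₂ ⊗ₜ[ℝ] ExteriorAlgebra.ι ℝ u) = 0) := by
  have ho : Q.IsOrtho g₁ g₂ := by
    rw [QuadraticMap.isOrtho_def]
    unfold QuadraticMap.polar at horth
    linarith
  have hc : CliffordAlgebra.ι Q g₂ * CliffordAlgebra.ι Q g₁
      = -(CliffordAlgebra.ι Q g₁ * CliffordAlgebra.ι Q g₂) :=
    CliffordAlgebra.ι_mul_ι_comm_of_isOrtho ho.symm
  have he : ExteriorAlgebra.ι ℝ v * ExteriorAlgebra.ι ℝ u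
      = -(ExteriorAlgebra.ι ℝ u * ExteriorAlgebra.ι ℝ v) :=
    eq_neg_of_add_eq_zero_left <| by
      rw [add_comm]; exact ExteriorAlgebra.ι_add_mul_swap u v
  refine ⟨?_, ?_, ?_, ?_, ?_⟩ <;>
    simp only [Algebra.TensorProduct.tmul_mul_tmul, mul_one, one_mul]
  · rw [← TensorProduct.tmul_add, ExteriorAlgebra.ι_add_mul_swap,
      TensorProduct.tmul_zero]
  · rw [← TensorProduct.tmul_add, ExteriorAlgebra.ι_add_mul_swap,
      TensorProduct.tmul_zero]
  · rw [hc, he, TensorProduct.neg_tmul, TensorProduct.tmul_neg, neg_neg, sub_self]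
  · rw [mul_assoc, hc, mul_neg, TensorProduct.neg_tmul, ← mul_assoc,
      add_neg_cancel]
  · rw [← mul_assoc, hc, neg_mul, TensorProduct.neg_tmul, mul_assoc,
      neg_add_cancel]
end
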